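/- Continuous energy dissipation for the Fokker-Planck equation: let T > 0, let J ⊆ ℝ be an open interval, let φ : J → ℝ be continuous with φ > 0 on J, let g : J → ℝ satisfy g'(s) = 1/φ(s) for all s ∈ J, let G be an antiderivative of g, and let v : [0,1] → ℝ be twice continuously differentiable. Suppose u : [0,1] × (0,T) → ℝ takes values in J, is continuously differentiable in t and twice continuously differentiable in x (with all these partials jointly continuous), solves ∂u/∂t = ∂/∂x ( ∂u/∂x − φ(u) ∂v/∂x ) on (0,1) × (0,T), and satisfies the no-flux boundary conditions ∂u/∂x (x,t) − φ(u(x,t)) v'(x) = 0 at x = 0 and x = 1 for all t ∈ (0,T). Then the energy 𝔈(t) = ∫₀¹ ( G(u(x,t)) − u(x,t) v(x) ) dx is differentiable on (0,T) with 𝔈'(t) = −∫₀¹ φ(u(x,t)) ( ∂/∂x [ g(u(x,t)) − v(x) ] )² dx, and in particular 𝔈'(t) ≤ 0 for all t ∈ (0,T). -/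

import Mathlib

/-- continuous energy dissipation for the Fokker-Planck equation
(gradient-flow form, κ = 1): along a smooth solution of
`∂u/∂t = ∂/∂x (∂u/∂x − φ(u) ∂v/∂x)` with no-flux boundary conditions, the energy
`𝔈(t) = ∫₀¹ (G(u) − u v)` satisfies
`𝔈'(t) = −∫₀¹ φ(u) (∂/∂x [g(u) − v])² ≤ 0`. -/
theorem continuous_energy_dissipation_fokker_planck
    (T : ℝ) (hT : 0 < T)
    (J : Set ℝ) (hJopen : IsOpen J) (hJconn : J.OrdConnected)
    (φ : ℝ → ℝ) (hφcont : ContinuousOn φ J) (hφpos : ∀ s ∈ J, 0 < φ s)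
    (g G : ℝ → ℝ)
    (hg : ∀ s ∈ J, HasDerivAt g (1 / φ s) s)
    (hG : ∀ s ∈ J, HasDerivAt G (g s) s)
    (v vd vdd : ℝ → ℝ)
    (hv1 : ∀ x ∈ Set.Icc (0:ℝ) 1, HasDerivWithinAt v (vd x) (Set.Icc 0 1) x)
    (hv2 : ∀ x ∈ Set.Icc (0:ℝ) 1, HasDerivWithinAt vd (vdd x) (Set.Icc 0 1) x)
    (hvddcont : ContinuousOn vdd (Set.Icc 0 1))
    (u ut ux uxx : ℝ → ℝ → ℝ)
    (huJ : ∀ x ∈ Set.Icc (0:ℝ) 1, ∀ t ∈ Set.Ioo 0 T, u x t ∈ J)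
    (hut : ∀ x ∈ Set.Icc (0:ℝ) 1, ∀ t ∈ Set.Ioo 0 T,
      HasDerivAt (fun s => u x s) (ut x t) t)
    (hux : ∀ t ∈ Set.Ioo 0 T, ∀ x ∈ Set.Icc (0:ℝ) 1,
      HasDerivWithinAt (fun y => u y t) (ux x t) (Set.Icc 0 1) x)
    (huxx : ∀ t ∈ Set.Ioo 0 T, ∀ x ∈ Set.Icc (0:ℝ) 1,
      HasDerivWithinAt (fun y => ux y t) (uxx x t) (Set.Icc 0 1) x)
    (hcont_u : ContinuousOn (fun p : ℝ × ℝ => u p.1 p.2)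
      (Set.Icc 0 1 ×ˢ Set.Ioo 0 T))
    (hcont_ut : ContinuousOn (fun p : ℝ × ℝ => ut p.1 p.2)
      (Set.Icc 0 1 ×ˢ Set.Ioo 0 T))
    (hcont_ux : ContinuousOn (fun p : ℝ × ℝ => ux p.1 p.2)
      (Set.Icc 0 1 ×ˢ Set.Ioo 0 T))
    (hcont_uxx : ContinuousOn (fun p : ℝ × ℝ => uxx p.1 p.2)
      (Set.Icc 0 1 ×ˢ Set.Ioo 0 T))
    (hpde : ∀ x ∈ Set.Ioo (0:ℝ) 1, ∀ t ∈ Set.Ioo 0 T,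
      HasDerivAt (fun y => ux y t - φ (u y t) * vd y) (ut x t) x)
    (hbc0 : ∀ t ∈ Set.Ioo 0 T, ux 0 t - φ (u 0 t) * vd 0 = 0)
    (hbc1 : ∀ t ∈ Set.Ioo 0 T, ux 1 t - φ (u 1 t) * vd 1 = 0) :
    ∀ t ∈ Set.Ioo 0 T,
      HasDerivAt (fun s => ∫ x in (0:ℝ)..1, (G (u x s) - u x s * v x))
        (-∫ x in (0:ℝ)..1, φ (u x t) * (deriv (fun y => g (u y t) - v y) x) ^ 2) t
      ∧ -∫ x in (0:ℝ)..1, φ (u x t) * (deriv (fun y => g (u y t) - v y) x) ^ 2 ≤ 0 := by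
  intro t₀ ht₀
  obtain ⟨ht₀0, ht₀T⟩ := ht₀
  have ht₀' : t₀ ∈ Set.Ioo 0 T := ⟨ht₀0, ht₀T⟩
  -- time window
  have hm0 : 0 < min t₀ (T - t₀) := lt_min ht₀0 (sub_pos.2 ht₀T)
  have hm1 : min t₀ (T - t₀) ≤ t₀ := min_le_left _ _
  have hm2 : min t₀ (T - t₀) ≤ T - t₀ := min_le_right _ _
  set ε : ℝ := min t₀ (T - t₀) / 2 with hε_def
  have hε : 0 < ε := by positivity
  have hball : Set.Icc (t₀ - ε) (t₀ + ε) ⊆ Set.Ioo 0 T := by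
    intro s hs
    obtain ⟨hs1, hs2⟩ := hs
    constructor <;> simp only [hε_def] at hs1 hs2 <;> [linarith; linarith]
  -- basic continuity facts
  have hgc : ContinuousOn g J := fun s hs => (hg s hs).continuousAt.continuousWithinAt
  have hGc : ContinuousOn G J := fun s hs => (hG s hs).continuousAt.continuousWithinAt
  have hvc : ContinuousOn v (Set.Icc 0 1) := fun x hx => (hv1 x hx).continuousWithinAt
  have hvdc : ContinuousOn vd (Set.Icc 0 1) := fun x hx => (hv2 x hx).continuousWithinAt
  have huc : ∀ s ∈ Set.Ioo 0 T, ContinuousOn (fun x => u x s) (Set.Icc 0 1) :=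
    fun s hs x hx => (hux s hs x hx).continuousWithinAt
  have huxc : ContinuousOn (fun x => ux x t₀) (Set.Icc 0 1) :=
    fun x hx => (huxx t₀ ht₀' x hx).continuousWithinAt
  have hmapsJ : ∀ s ∈ Set.Ioo 0 T, Set.MapsTo (fun x => u x s) (Set.Icc 0 1) J :=
    fun s hs x hx => huJ x hx s hs
  have hguc : ContinuousOn (fun x => g (u x t₀)) (Set.Icc 0 1) :=
    hgc.comp (huc t₀ ht₀') (hmapsJ t₀ ht₀')
  have hφuc : ContinuousOn (fun x => φ (u x t₀)) (Set.Icc 0 1) :=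
    hφcont.comp (huc t₀ ht₀') (hmapsJ t₀ ht₀')
  have hφu_ne : ∀ x ∈ Set.Icc (0:ℝ) 1, φ (u x t₀) ≠ 0 :=
    fun x hx => (hφpos _ (huJ x hx t₀ ht₀')).ne'
  have hutc : ContinuousOn (fun x => ut x t₀) (Set.Icc (0:ℝ) 1) := by
    have h1 : ContinuousOn (fun x : ℝ => ((x, t₀) : ℝ × ℝ)) (Set.Icc 0 1) :=
      (continuous_id.prodMk continuous_const).continuousOn
    exact hcont_ut.comp h1 (fun x hx => ⟨hx, ht₀'⟩)
  -- the flux and relevant integrands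
  set w : ℝ → ℝ := fun x => ux x t₀ - φ (u x t₀) * vd x with hw_def
  set q : ℝ → ℝ := fun x => w x ^ 2 / φ (u x t₀) with hq_def
  set r : ℝ → ℝ := fun x => (g (u x t₀) - v x) * ut x t₀ with hr_def
  have hwc : ContinuousOn w (Set.Icc 0 1) := huxc.sub (hφuc.mul hvdc)
  have hqc : ContinuousOn q (Set.Icc 0 1) := (hwc.pow 2).div hφuc hφu_ne
  have hrc : ContinuousOn r (Set.Icc 0 1) := (hguc.sub hvc).mul hutc
  have huIcc : Set.uIcc (0:ℝ) 1 = Set.Icc 0 1 := Set.uIcc_of_le (by norm_num)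
  have huIoc : Set.uIoc (0:ℝ) 1 = Set.Ioc 0 1 := Set.uIoc_of_le (by norm_num)
  -- key spatial derivative facts at interior points
  have hkey : ∀ x ∈ Set.Ioo (0:ℝ) 1,
      HasDerivAt (fun y => g (u y t₀) - v y) (w x / φ (u x t₀)) x ∧
      HasDerivAt (fun y => (g (u y t₀) - v y) * w y) (q x + r x) x := by
    intro x hx
    have hxI : x ∈ Set.Icc (0:ℝ) 1 := Set.Ioo_subset_Icc_self hx
    have hmem : Set.Icc (0:ℝ) 1 ∈ nhds x := Icc_mem_nhds hx.1 hx.2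
    have hu' : HasDerivAt (fun y => u y t₀) (ux x t₀) x :=
      (hux t₀ ht₀' x hxI).hasDerivAt hmem
    have hv' : HasDerivAt v (vd x) x := (hv1 x hxI).hasDerivAt hmem
    have hφne : φ (u x t₀) ≠ 0 := hφu_ne x hxI
    have hgu' : HasDerivAt (fun y => g (u y t₀)) (1 / φ (u x t₀) * ux x t₀) x :=
      (hg _ (huJ x hxI t₀ ht₀')).comp x hu'
    have hGV : HasDerivAt (fun y => g (u y t₀) - v y)
        (1 / φ (u x t₀) * ux x t₀ - vd x) x := hgu'.sub hv'
    have heq : 1 / φ (u x t₀) * ux x t₀ - vd x = w x / φ (u x t₀) := by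
      simp only [hw_def]
      field_simp
    have hGV' : HasDerivAt (fun y => g (u y t₀) - v y) (w x / φ (u x t₀)) x := heq ▸ hGV
    refine ⟨hGV', ?_⟩
    have hw' : HasDerivAt w (ut x t₀) x := hpde x hx t₀ ht₀'
    have := hGV'.mul hw'
    refine this.congr_deriv ?_
    rw [hq_def, hr_def]
    field_simp
  have hderiv_eq : ∀ x ∈ Set.Ioo (0:ℝ) 1,
      deriv (fun y => g (u y t₀) - v y) x = w x / φ (u x t₀) :=
    fun x hx => ((hkey x hx).1).deriv
  -- Step A : FTC / integration by parts
  have hqint : IntervalIntegrable q MeasureTheory.volume 0 1 :=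
    (hqc.mono (by rw [huIcc])).intervalIntegrable
  have hrint : IntervalIntegrable r MeasureTheory.volume 0 1 :=
    (hrc.mono (by rw [huIcc])).intervalIntegrable
  have hHcont : ContinuousOn (fun x => (g (u x t₀) - v x) * w x) (Set.Icc 0 1) :=
    (hguc.sub hvc).mul hwc
  have hFTC : (∫ x in (0:ℝ)..1, (q x + r x)) =
      (g (u 1 t₀) - v 1) * w 1 - (g (u 0 t₀) - v 0) * w 0 :=
    intervalIntegral.integral_eq_sub_of_hasDerivAt_of_le (by norm_num) hHcont
      (fun x hx => (hkey x hx).2) (hqint.add hrint)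
  have hW0 : w 0 = 0 := hbc0 t₀ ht₀'
  have hW1 : w 1 = 0 := hbc1 t₀ ht₀'
  rw [hW0, hW1, intervalIntegral.integral_add hqint hrint] at hFTC
  have hr_eq : (∫ x in (0:ℝ)..1, r x) = -∫ x in (0:ℝ)..1, q x := by
    have : (∫ x in (0:ℝ)..1, q x) + ∫ x in (0:ℝ)..1, r x = 0 := by
      rw [hFTC]; ring
    linarith
  -- Step B : rewrite the target integrand
  have hcongr : (∫ x in (0:ℝ)..1, φ (u x t₀) * (deriv (fun y => g (u y t₀) - v y) x) ^ 2)
      = ∫ x in (0:ℝ)..1, q x := by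
    apply intervalIntegral.integral_congr_ae
    have h1 : ∀ᵐ x : ℝ, x ≠ (1:ℝ) := by
      refine MeasureTheory.ae_iff.2 ?_
      simp only [not_not]
      simp [Real.volume_singleton]
    filter_upwards [h1] with x hx1 hxI
    rw [huIoc] at hxI
    have hxIoo : x ∈ Set.Ioo (0:ℝ) 1 := ⟨hxI.1, lt_of_le_of_ne hxI.2 hx1⟩
    rw [hderiv_eq x hxIoo]
    have hφne : φ (u x t₀) ≠ 0 := hφu_ne x (Set.Ioo_subset_Icc_self hxIoo)
    simp only [hq_def]
    field_simp
  -- Step C : differentiation under the integral sign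
  have hSsub : Set.Icc (0:ℝ) 1 ×ˢ Set.Icc (t₀ - ε) (t₀ + ε) ⊆
      Set.Icc 0 1 ×ˢ Set.Ioo 0 T := Set.prod_mono (le_refl _) hball
  have hFpc : ContinuousOn (fun p : ℝ × ℝ => (g (u p.1 p.2) - v p.1) * ut p.1 p.2)
      (Set.Icc (0:ℝ) 1 ×ˢ Set.Icc (t₀ - ε) (t₀ + ε)) := by
    have hgup : ContinuousOn (fun p : ℝ × ℝ => g (u p.1 p.2))
        (Set.Icc (0:ℝ) 1 ×ˢ Set.Icc (t₀ - ε) (t₀ + ε)) :=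
      hgc.comp (hcont_u.mono hSsub) (fun p hp => huJ p.1 hp.1 p.2 (hball hp.2))
    have hvp : ContinuousOn (fun p : ℝ × ℝ => v p.1)
        (Set.Icc (0:ℝ) 1 ×ˢ Set.Icc (t₀ - ε) (t₀ + ε)) :=
      hvc.comp continuous_fst.continuousOn (fun p hp => hp.1)
    exact (hgup.sub hvp).mul (hcont_ut.mono hSsub)
  obtain ⟨M, hM⟩ := (isCompact_Icc.prod isCompact_Icc).exists_bound_of_continuousOn hFpc
  have hballIcc : Metric.ball t₀ ε ⊆ Set.Icc (t₀ - ε) (t₀ + ε) := by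
    intro s hs
    rw [Metric.mem_ball, Real.dist_eq] at hs
    have := abs_lt.1 hs
    constructor <;> linarith [this.1, this.2]
  have hball' : Metric.ball t₀ ε ⊆ Set.Ioo 0 T := fun s hs => hball (hballIcc hs)
  have hmain := intervalIntegral.hasDerivAt_integral_of_dominated_loc_of_deriv_le
    (F := fun s x => G (u x s) - u x s * v x)
    (F' := fun s x => (g (u x s) - v x) * ut x s)
    (a := (0:ℝ)) (b := 1) (x₀ := t₀) (bound := fun _ => M) (μ := MeasureTheory.volume) (Metric.ball_mem_nhds t₀ hε)
    ?_ ?_ ?_ ?_ ?_ ?_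
  · obtain ⟨-, hE⟩ := hmain
    have hfinal : (-∫ x in (0:ℝ)..1,
        φ (u x t₀) * (deriv (fun y => g (u y t₀) - v y) x) ^ 2)
        = ∫ x in (0:ℝ)..1, (g (u x t₀) - v x) * ut x t₀ := by
      rw [hcongr]
      have : (∫ x in (0:ℝ)..1, (g (u x t₀) - v x) * ut x t₀) = ∫ x in (0:ℝ)..1, r x := rfl
      rw [this, hr_eq]
    constructor
    · rw [hfinal]; exact hE
    · have hnn : 0 ≤ ∫ x in (0:ℝ)..1,
          φ (u x t₀) * (deriv (fun y => g (u y t₀) - v y) x) ^ 2 :=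
        intervalIntegral.integral_nonneg (by norm_num)
          (fun x hx => mul_nonneg (hφpos _ (huJ x hx t₀ ht₀')).le (sq_nonneg _))
      linarith
  · -- measurability of F s near t₀
    filter_upwards [Ioo_mem_nhds ht₀0 ht₀T] with s hs
    have hc : ContinuousOn (fun x => G (u x s) - u x s * v x) (Set.Icc (0:ℝ) 1) :=
      (hGc.comp (huc s hs) (hmapsJ s hs)).sub ((huc s hs).mul hvc)
    rw [huIoc]
    exact (hc.mono Set.Ioc_subset_Icc_self).aestronglyMeasurable measurableSet_Ioc
  · -- integrability of F t₀
    apply ContinuousOn.intervalIntegrable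
    rw [huIcc]
    exact (hGc.comp (huc t₀ ht₀') (hmapsJ t₀ ht₀')).sub ((huc t₀ ht₀').mul hvc)
  · -- measurability of F' t₀
    rw [huIoc]
    exact (hrc.mono Set.Ioc_subset_Icc_self).aestronglyMeasurable measurableSet_Ioc
  · -- bound
    refine MeasureTheory.ae_of_all _ (fun x hx s hs => ?_)
    rw [huIoc] at hx
    exact hM (x, s) ⟨Set.Ioc_subset_Icc_self hx, hballIcc hs⟩
  · exact intervalIntegrable_const
  · -- differentiability in time
    refine MeasureTheory.ae_of_all _ (fun x hx s hs => ?_)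
    rw [huIoc] at hx
    have hxI : x ∈ Set.Icc (0:ℝ) 1 := Set.Ioc_subset_Icc_self hx
    have hsT : s ∈ Set.Ioo 0 T := hball' hs
    have hd1 : HasDerivAt (fun s => G (u x s)) (g (u x s) * ut x s) s :=
      (hG _ (huJ x hxI s hsT)).comp s (hut x hxI s hsT)
    have hd2 : HasDerivAt (fun s => u x s * v x) (ut x s * v x) s :=
      (hut x hxI s hsT).mul_const (v x)
    have := hd1.sub hd2
    convert this using 1
    · rfl
    ring
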